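/- Let u = Σ_{i=0}^m α_i ℓ'_i where ℓ'_i = (ℓ_i − ℓ_{i+1})/2 for i < m and ℓ'_m = (ℓ_0 + ℓ_m)/2. Then u is ℓ-positive (i.e., u = Σ a_i ℓ_i with a_1,…,a_m > 0) if and only if α_0 < α_1 < … < α_m. -/

import Mathlib

open Finset

/-- The value λ(k) for λ ∈ Λ = {0,1}^m, extended by the conventions λ(0) = 0 and
λ(m+1) = 1 (positions 1,…,m carry the actual values of λ). -/
def lamExt (m : ℕ) (lam : Fin m → Bool) (k : ℕ) : ℕ :=
  if h : 1 ≤ k ∧ k ≤ m then (if lam ⟨k - 1, by omega⟩ then 1 else 0)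
  else if k = 0 then 0 else 1

/-- The vector ℓ_i ∈ ℝ^Λ, ℓ_i(λ) = (−1)^{λ(i)}, for 0 ≤ i ≤ m. -/
def ell (m : ℕ) (i : ℕ) (lam : Fin m → Bool) : ℝ := (-1) ^ lamExt m lam i

/-- ℓ'_i = (ℓ_i − ℓ_{i+1})/2 for 0 ≤ i ≤ m−1 and ℓ'_m = (ℓ_0 + ℓ_m)/2. -/
noncomputable def ell' (m : ℕ) (i : ℕ) (lam : Fin m → Bool) : ℝ :=
  if i < m then (ell m i lam - ell m (i + 1) lam) / 2
  else (ell m 0 lam + ell m m lam) / 2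

/-- u is ℓ-positive if u = Σ_{i=0}^m a_i ℓ_i with a_1,…,a_m > 0. -/
def lpos (m : ℕ) (u : (Fin m → Bool) → ℝ) : Prop :=
  ∃ a : ℕ → ℝ, (∀ i ∈ Finset.Icc 1 m, 0 < a i) ∧
    u = fun lam => ∑ i ∈ Finset.range (m + 1), a i * ell m i lam

lemma ell_false (m i : ℕ) (hi : i ≤ m) : ell m i (fun _ => false) = 1 := by
  unfold ell lamExt
  by_cases h : 1 ≤ i ∧ i ≤ m
  · simp [h]
  · have : i = 0 := by omega
    simp [this]

lemma ell_single (m j i : ℕ) (hj : 1 ≤ j) (hi : i ≤ m) :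
    ell m i (fun k => decide (k.1 + 1 = j)) = if i = j then -1 else 1 := by
  unfold ell lamExt
  by_cases h : 1 ≤ i ∧ i ≤ m
  · have h1 : i - 1 + 1 = i := by omega
    simp only [dif_pos h, h1]
    by_cases hij : i = j <;> simp [hij]
  · have h0 : i = 0 := by omega
    subst h0
    rw [if_neg (by omega : ¬ (0 = j))]
    simp [h]

lemma extract (m : ℕ) (c : ℕ → ℝ) (j : ℕ) (hj : 1 ≤ j) (hjm : j ≤ m) :
    (∑ i ∈ Finset.range (m + 1), c i * ell m i (fun _ => false))
      - (∑ i ∈ Finset.range (m + 1), c i * ell m i (fun k => decide (k.1 + 1 = j)))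
    = 2 * c j := by
  rw [← Finset.sum_sub_distrib]
  rw [Finset.sum_eq_single j]
  · rw [ell_false m j hjm, ell_single m j j hj hjm]
    simp; ring
  · intro i hi hij
    have him : i ≤ m := by simpa using Nat.lt_succ_iff.mp (Finset.mem_range.mp hi)
    rw [ell_false m i him, ell_single m j i hj him, if_neg hij]
    ring
  · intro h
    exact absurd (Finset.mem_range.mpr (by omega)) h

lemma tel (α f : ℕ → ℝ) (n : ℕ) :
    ∑ i ∈ Finset.range n, α i * ((f i - f (i + 1)) / 2)
      = ∑ i ∈ Finset.range n, (α (i + 1) - α i) / 2 * f (i + 1)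
        + (α 0 * f 0 - α n * f n) / 2 := by
  induction n with
  | zero => simp
  | succ n ih => rw [Finset.sum_range_succ, Finset.sum_range_succ, ih]; ring

lemma ident (m : ℕ) (hm : 1 ≤ m) (α : ℕ → ℝ) (lam : Fin m → Bool) :
    ∑ i ∈ Finset.range (m + 1), α i * ell' m i lam
      = ∑ i ∈ Finset.range (m + 1),
          (if i = 0 then (α 0 + α m) / 2 else (α i - α (i - 1)) / 2) * ell m i lam := by
  rw [Finset.sum_range_succ, Finset.sum_range_succ' _ m]
  have h1 : ∑ i ∈ Finset.range m, α i * ell' m i lam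
      = ∑ i ∈ Finset.range m, α i * ((ell m i lam - ell m (i + 1) lam) / 2) := by
    refine Finset.sum_congr rfl fun i hi => ?_
    rw [ell', if_pos (Finset.mem_range.mp hi)]
  have h2 : ∑ i ∈ Finset.range m,
        (if i + 1 = 0 then (α 0 + α m) / 2 else (α (i + 1) - α (i + 1 - 1)) / 2)
          * ell m (i + 1) lam
      = ∑ i ∈ Finset.range m, (α (i + 1) - α i) / 2 * ell m (i + 1) lam := by
    refine Finset.sum_congr rfl fun i hi => ?_
    simp
  rw [h1, h2, tel α (fun i => ell m i lam) m]
  have h3 : ell' m m lam = (ell m 0 lam + ell m m lam) / 2 := by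
    rw [ell', if_neg (lt_irrefl m)]
  rw [h3]
  simp only [if_pos rfl, if_true]
  ring

/-- u = Σ_{i=0}^m α_i ℓ'_i is ℓ-positive iff α_0 < α_1 < … < α_m. -/
theorem stmt14 (m : ℕ) (hm : 1 ≤ m) (α : ℕ → ℝ) :
    lpos m (fun lam => ∑ i ∈ Finset.range (m + 1), α i * ell' m i lam) ↔
      ∀ i < m, α i < α (i + 1) := by
  set a : ℕ → ℝ := fun i => if i = 0 then (α 0 + α m) / 2 else (α i - α (i - 1)) / 2 with ha
  constructor
  · rintro ⟨b, hb, hu⟩ i hi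
    have hfun : ∀ lam, ∑ k ∈ Finset.range (m + 1), a k * ell m k lam
        = ∑ k ∈ Finset.range (m + 1), b k * ell m k lam := by
      intro lam
      rw [← ident m hm α lam]
      exact congrFun hu lam
    have he : 2 * a (i + 1) = 2 * b (i + 1) := by
      rw [← extract m a (i + 1) (by omega) (by omega),
        ← extract m b (i + 1) (by omega) (by omega), hfun, hfun]
    have hbpos : 0 < b (i + 1) := hb (i + 1) (Finset.mem_Icc.mpr ⟨by omega, by omega⟩)
    have : a (i + 1) = (α (i + 1) - α i) / 2 := by simp [ha]
    nlinarith [this ▸ he]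
  · intro hmono
    refine ⟨a, fun i hi => ?_, funext fun lam => ident m hm α lam⟩
    obtain ⟨h1, h2⟩ := Finset.mem_Icc.mp hi
    have : a i = (α i - α (i - 1)) / 2 := by
      simp [ha, show i ≠ 0 by omega]
    rw [this]
    have := hmono (i - 1) (by omega)
    have hi' : i - 1 + 1 = i := by omega
    rw [hi'] at this
    linarith
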